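/- Let γ ∈ SL₂(ℂ) with Ψ(γ) = [[A, C′],[C, A′]] ∈ SB₂(ℍ) and γ ∉ SU₂(ℂ) (equivalently C ≠ 0). Then |A|² = (2 + ‖γ‖²)/4 and |C|² = (‖γ‖² − 2)/4. -/

import Mathlib

open scoped Quaternion
open Matrix

/-- Embedding of `ℂ` into the real quaternions `ℍ`. -/
noncomputable def toQ (z : ℂ) : ℍ[ℝ] := ⟨z.re, z.im, 0, 0⟩

/-- The quaternion `j`. -/
noncomputable def jq : ℍ[ℝ] := ⟨0, 0, 1, 0⟩

/-- The map `Ψ(γ) = ḡ γ g` where `g = (1/√2)[[1,j],[j,1]]`. -/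
noncomputable def Ψ (γ : Matrix (Fin 2) (Fin 2) ℂ) : Matrix (Fin 2) (Fin 2) ℍ[ℝ] :=
  ((Real.sqrt 2)⁻¹ • !![(1 : ℍ[ℝ]), -jq; -jq, 1]) * (γ.map toQ) *
    ((Real.sqrt 2)⁻¹ • !![(1 : ℍ[ℝ]), jq; jq, 1])

/-- `‖γ‖²`, the sum of the squared moduli of the entries of `γ`. -/
noncomputable def mnorm (γ : Matrix (Fin 2) (Fin 2) ℂ) : ℝ :=
  Complex.normSq (γ 0 0) + Complex.normSq (γ 0 1) + Complex.normSq (γ 1 0) + Complex.normSq (γ 1 1)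


private lemma hPsi' (γ : Matrix (Fin 2) (Fin 2) ℂ) : Ψ γ = ((2:ℝ))⁻¹ • (!![(1 : ℍ[ℝ]), -jq; -jq, 1] * (γ.map toQ) * !![(1 : ℍ[ℝ]), jq; jq, 1]) := by
  rw [Ψ, Matrix.smul_mul, Matrix.mul_smul, Matrix.smul_mul, smul_smul, ← mul_inv,
    Real.mul_self_sqrt (by norm_num)]

private lemma toQ_re (z : ℂ) : (toQ z).re = z.re := rfl
private lemma toQ_imI (z : ℂ) : (toQ z).imI = z.im := rfl
private lemma toQ_imJ (z : ℂ) : (toQ z).imJ = 0 := rfl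
private lemma toQ_imK (z : ℂ) : (toQ z).imK = 0 := rfl
private lemma jq_re : jq.re = 0 := rfl
private lemma jq_imI : jq.imI = 0 := rfl
private lemma jq_imJ : jq.imJ = 1 := rfl
private lemma jq_imK : jq.imK = 0 := rfl

private lemma entryA' (γ : Matrix (Fin 2) (Fin 2) ℂ) :
    Ψ γ 0 0 = (2:ℝ)⁻¹ • (⟨(γ 0 0).re + (γ 1 1).re, (γ 0 0).im - (γ 1 1).im,
      (γ 0 1).re - (γ 1 0).re, (γ 0 1).im + (γ 1 0).im⟩ : ℍ[ℝ]) := by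
  rw [hPsi']
  simp only [Matrix.smul_apply, Matrix.mul_apply, Fin.sum_univ_two, Matrix.map_apply,
    Matrix.cons_val', Matrix.cons_val_zero, Matrix.cons_val_one, Matrix.head_cons,
    Matrix.empty_val', Matrix.cons_val_fin_one]
  congr 1
  apply QuaternionAlgebra.ext <;>
  simp [toQ_re, toQ_imI, toQ_imJ, toQ_imK, jq_re, jq_imI, jq_imJ, jq_imK, Quaternion.re_mul, Quaternion.imI_mul,
    Quaternion.imJ_mul, Quaternion.imK_mul] <;> ring

private lemma entryC' (γ : Matrix (Fin 2) (Fin 2) ℂ) :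
    Ψ γ 1 0 = (2:ℝ)⁻¹ • (⟨(γ 1 0).re + (γ 0 1).re, (γ 1 0).im - (γ 0 1).im,
      (γ 1 1).re - (γ 0 0).re, (γ 1 1).im + (γ 0 0).im⟩ : ℍ[ℝ]) := by
  rw [hPsi']
  simp only [Matrix.smul_apply, Matrix.mul_apply, Fin.sum_univ_two, Matrix.map_apply,
    Matrix.cons_val', Matrix.cons_val_zero, Matrix.cons_val_one, Matrix.head_cons,
    Matrix.empty_val', Matrix.cons_val_fin_one]
  congr 1
  apply QuaternionAlgebra.ext <;>
  simp [toQ_re, toQ_imI, toQ_imJ, toQ_imK, jq_re, jq_imI, jq_imJ, jq_imK, Quaternion.re_mul, Quaternion.imI_mul,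
    Quaternion.imJ_mul, Quaternion.imK_mul] <;> ring

/-- For `γ ∈ SL₂(ℂ) \ SU₂(ℂ)` with `Ψ(γ) = [[A, C′],[C, A′]]`,
`|A|² = (2 + ‖γ‖²)/4` and `|C|² = (‖γ‖² − 2)/4`. -/
theorem stmt4 (γ : Matrix (Fin 2) (Fin 2) ℂ) (hdet : γ.det = 1) (hsu : mnorm γ ≠ 2) :
    Quaternion.normSq (Ψ γ 0 0) = (2 + mnorm γ) / 4 ∧
    Quaternion.normSq (Ψ γ 1 0) = (mnorm γ - 2) / 4 := by
  rw [Matrix.det_fin_two] at hdet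
  have hre := congrArg Complex.re hdet
  have him := congrArg Complex.im hdet
  simp only [Complex.sub_re, Complex.mul_re, Complex.sub_im, Complex.mul_im,
    Complex.one_re, Complex.one_im] at hre him
  constructor
  · rw [entryA', ]; erw [Quaternion.normSq_def']
    simp only [QuaternionAlgebra.re_smul, QuaternionAlgebra.imI_smul, QuaternionAlgebra.imJ_smul,
      QuaternionAlgebra.imK_smul, smul_eq_mul, mnorm, Complex.normSq_apply]
    linear_combination hre / 2
  · rw [entryC', ]; erw [Quaternion.normSq_def']
    simp only [QuaternionAlgebra.re_smul, QuaternionAlgebra.imI_smul, QuaternionAlgebra.imJ_smul,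
      QuaternionAlgebra.imK_smul, smul_eq_mul, mnorm, Complex.normSq_apply]
    linear_combination -hre / 2
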